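/- Let E be a field of characteristic p and (M, φ_M) a finite-dimensional E-vector space with a σ-semilinear Frobenius φ_M whose image spans M over E (an étale Φ-module). For any m ∈ M, define N := M ⊕ E·t with φ_N extending φ_M σ-semilinearly by φ_N(t) = t + m. Then (N, φ_N) is again an étale Φ-module, the inclusion u: M → N is a morphism of Φ-modules, and the class of m in M/(φ_M − 1)M maps to zero in N/(φ_N − 1)N. -/

import Mathlib

/-- **Effaceability of `H^1` for étale Φ-modules.**
Let `E` be a field of characteristic `p` and `(M, φM)` an étale Φ-module over `E`:
a finite dimensional `E`-vector space with an additive `σ`-semilinear Frobenius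
(`φM (c • x) = c^p • φM x`) whose image spans `M` over `E`. Fix `m ∈ M` and let
`N := M ⊕ E·t` (realized as `M × E` with `t = (0,1)`), with `φN` extending `φM`
`σ`-semilinearly by `φN t = t + m`, i.e. `φN (x, c) = (φM x + c^p • m, c^p)`.
Then `(N, φN)` is again an étale Φ-module, the inclusion `u : M → N` is an injective
morphism of Φ-modules, and the class of `m` in `M/(φM − 1)M` maps to zero in
`N/(φN − 1)N`, i.e. `(m, 0)` lies in the image of `φN − 1`. -/
theorem etale_phi_module_effaceability {p : ℕ} [Fact p.Prime]
    (E : Type) [Field E] [CharP E p]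
    (M : Type) [AddCommGroup M] [Module E M] [FiniteDimensional E M]
    (φM : M → M)
    (hadd : ∀ x y, φM (x + y) = φM x + φM y)
    (hsemi : ∀ (c : E) (x : M), φM (c • x) = c ^ p • φM x)
    (hetale : Submodule.span E (Set.range φM) = ⊤)
    (m : M)
    (φN : M × E → M × E)
    (hφN : φN = fun q => (φM q.1 + q.2 ^ p • m, q.2 ^ p)) :
    (∀ q r, φN (q + r) = φN q + φN r) ∧
    (∀ (c : E) (q : M × E), φN (c • q) = c ^ p • φN q) ∧
    Submodule.span E (Set.range φN) = ⊤ ∧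
    (∀ x : M, φN (x, 0) = (φM x, 0)) ∧
    Function.Injective (fun x : M => ((x, 0) : M × E)) ∧
    ∃ n : M × E, φN n - n = (m, 0) := by
  have hp : p.Prime := Fact.out
  have hφ0 : φM 0 = 0 := by
    have := hadd 0 0
    simpa using this.symm
  have h0p : (0 : E) ^ p = 0 := zero_pow hp.ne_zero
  have hincl : ∀ x : M, φN (x, 0) = (φM x, 0) := by
    intro x; simp [hφN, h0p]
  refine ⟨?_, ?_, ?_, hincl, ?_, ?_⟩
  · intro q r
    subst hφN
    have haddE : ∀ a b : E, (a + b) ^ p = a ^ p + b ^ p := fun a b => add_pow_char a b p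
    simp only [Prod.fst_add, Prod.snd_add, hadd, haddE, Prod.mk_add_mk]
    ext <;> simp <;> module
  · intro c q
    subst hφN
    simp only [Prod.smul_fst, Prod.smul_snd, smul_eq_mul, hsemi, mul_pow,
      Prod.smul_mk, smul_add, smul_smul]
  · -- span is top
    rw [eq_top_iff]
    rintro ⟨x, c⟩ -
    have hM : ∀ y : M, ((y, 0) : M × E) ∈ Submodule.span E (Set.range φN) := by
      intro y
      have hy : y ∈ Submodule.span E (Set.range φM) := hetale ▸ Submodule.mem_top
      induction hy using Submodule.span_induction with
      | mem z hz =>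
        obtain ⟨w, rfl⟩ := hz
        rw [← hincl w]
        exact Submodule.subset_span ⟨(w, 0), rfl⟩
      | zero => exact Submodule.zero_mem (Submodule.span E (Set.range φN))
      | add a b _ _ ha hb => simpa using Submodule.add_mem _ ha hb
      | smul c a _ ha =>
        have := Submodule.smul_mem _ c ha
        simpa [Prod.smul_mk] using this
    have ht : ((m, 1) : M × E) ∈ Submodule.span E (Set.range φN) := by
      have : φN (0, 1) = (m, 1) := by simp [hφN, hφ0]
      exact this ▸ Submodule.subset_span ⟨(0, 1), rfl⟩
    have : ((x, c) : M × E) = (x - c • m, 0) + c • (m, 1) := by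
      ext <;> simp
    rw [this]
    exact Submodule.add_mem _ (hM _) (Submodule.smul_mem _ c ht)
  · intro a b hab
    simpa using congrArg Prod.fst hab
  · refine ⟨(0, 1), ?_⟩
    simp [hφN, hφ0]
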